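/- Let T > 0 and let S = ⋃_{k∈ℕ} (kT, (k+1)T) ⊆ (0,∞). Let Z : [0,∞) → ℝ be continuous, differentiable at every point of S, and suppose there is M ≥ 0 with |Z'(t)| ≤ M for all t ∈ S. If ∫_0^∞ Z(t)² dt < ∞, then Z(t) → 0 as t → ∞. -/

import Mathlib

open Set Filter MeasureTheory

/-- Barbalat-type lemma. If `Z` is continuous on `[0,∞)`, has a derivative
bounded by `M` off the grid points `kT`, and `Z²` is integrable on `[0,∞)`, then
`Z(t) → 0` as `t → ∞`. -/
theorem barbalat_piecewise
    (T : ℝ) (hT : 0 < T)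
    (S : Set ℝ) (hS : S = ⋃ k : ℕ, Ioo ((k:ℝ)*T) (((k:ℝ)+1)*T))
    (Z Z' : ℝ → ℝ)
    (hZc : ContinuousOn Z (Ici 0))
    (hZd : ∀ t ∈ S, HasDerivAt Z (Z' t) t)
    (M : ℝ) (hM : 0 ≤ M) (hbound : ∀ t ∈ S, |Z' t| ≤ M)
    (hint : IntegrableOn (fun t => (Z t)^2) (Ici 0)) :
    Tendsto Z atTop (nhds 0) := by
  -- Step 1: Lipschitz estimate on each closed period interval
  have key : ∀ k : ℕ, ∀ x ∈ Icc ((k:ℝ)*T) (((k:ℝ)+1)*T), ∀ y ∈ Icc ((k:ℝ)*T) (((k:ℝ)+1)*T),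
      x ≤ y → |Z y - Z x| ≤ M * (y - x) := by
    intro k x hx y hy hxy
    have hIoo : Ioo ((k:ℝ)*T) (((k:ℝ)+1)*T) ⊆ S := by
      rw [hS]; exact subset_iUnion (fun k : ℕ => Ioo ((k:ℝ)*T) (((k:ℝ)+1)*T)) k
    have hintIcc : interior (Icc ((k:ℝ)*T) (((k:ℝ)+1)*T)) = Ioo ((k:ℝ)*T) (((k:ℝ)+1)*T) :=
      interior_Icc
    have hsub : Icc ((k:ℝ)*T) (((k:ℝ)+1)*T) ⊆ Ici (0:ℝ) := by
      intro z hz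
      have h0 : (0:ℝ) ≤ (k:ℝ)*T := by positivity
      exact le_trans h0 hz.1
    have hc : ContinuousOn Z (Icc ((k:ℝ)*T) (((k:ℝ)+1)*T)) := hZc.mono hsub
    have hd : DifferentiableOn ℝ Z (interior (Icc ((k:ℝ)*T) (((k:ℝ)+1)*T))) := by
      rw [hintIcc]
      intro z hz
      exact ((hZd z (hIoo hz)).differentiableAt).differentiableWithinAt
    have hub : ∀ z ∈ interior (Icc ((k:ℝ)*T) (((k:ℝ)+1)*T)), deriv Z z ≤ M := by
      intro z hz
      rw [hintIcc] at hz
      rw [(hZd z (hIoo hz)).deriv]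
      exact (abs_le.1 (hbound z (hIoo hz))).2
    have hlb : ∀ z ∈ interior (Icc ((k:ℝ)*T) (((k:ℝ)+1)*T)), -M ≤ deriv Z z := by
      intro z hz
      rw [hintIcc] at hz
      rw [(hZd z (hIoo hz)).deriv]
      exact (abs_le.1 (hbound z (hIoo hz))).1
    have h1 := (convex_Icc ((k:ℝ)*T) (((k:ℝ)+1)*T)).image_sub_le_mul_sub_of_deriv_le
      hc hd hub x hx y hy hxy
    have h2 := (convex_Icc ((k:ℝ)*T) (((k:ℝ)+1)*T)).mul_sub_le_image_sub_of_le_deriv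
      hc hd hlb x hx y hy hxy
    rw [abs_le]
    constructor <;> nlinarith
  -- Glue: Lipschitz on [0, n*T] by induction
  have lipn : ∀ n : ℕ, ∀ x y : ℝ, 0 ≤ x → x ≤ y → y ≤ (n:ℝ)*T → |Z y - Z x| ≤ M * (y - x) := by
    intro n
    induction n with
    | zero =>
      intro x y hx hxy hy
      simp only [Nat.cast_zero, zero_mul] at hy
      have hxy' : x = y := le_antisymm hxy (hy.trans hx)
      simp [hxy']
    | succ n ih =>
      intro x y hx hxy hy
      have hy' : y ≤ ((n:ℝ)+1)*T := by push_cast at hy; linarith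
      by_cases hyn : y ≤ (n:ℝ)*T
      · exact ih x y hx hxy hyn
      · push_neg at hyn
        have hnT0 : (0:ℝ) ≤ (n:ℝ)*T := by positivity
        by_cases hxn : (n:ℝ)*T ≤ x
        · exact key n x ⟨hxn, by linarith⟩ y ⟨hyn.le, hy'⟩ hxy
        · push_neg at hxn
          have h1 := ih x ((n:ℝ)*T) hx hxn.le le_rfl
          have h2 := key n ((n:ℝ)*T) ⟨le_rfl, by nlinarith⟩ y ⟨hyn.le, hy'⟩ hyn.le
          calc |Z y - Z x| ≤ |Z y - Z ((n:ℝ)*T)| + |Z ((n:ℝ)*T) - Z x| :=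
                abs_sub_le (Z y) (Z ((n:ℝ)*T)) (Z x)
            _ ≤ M * (y - (n:ℝ)*T) + M * ((n:ℝ)*T - x) := add_le_add h2 h1
            _ = M * (y - x) := by ring
  -- Lipschitz on all of [0, ∞)
  have hlip : ∀ x y : ℝ, 0 ≤ x → x ≤ y → |Z y - Z x| ≤ M * (y - x) := by
    intro x y hx hxy
    obtain ⟨n, hn⟩ := exists_nat_gt (y / T)
    have hyn : y ≤ (n:ℝ)*T := by
      rw [div_lt_iff₀ hT] at hn
      linarith
    exact lipn n x y hx hxy hyn
  -- Step 2: tail integrals tend to zero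
  have tail : Tendsto (fun n : ℕ => ∫ x in Ici (n:ℝ), (Z x)^2) atTop (nhds 0) := by
    have L := MeasureTheory.tendsto_setIntegral_of_antitone (μ := volume)
      (f := fun x => (Z x)^2) (s := fun n : ℕ => Ici (n:ℝ))
      (fun n => measurableSet_Ici)
      (fun m n hmn => Ici_subset_Ici.2 (Nat.cast_le.mpr hmn))
      ⟨0, by simpa using hint⟩
    have B : ⋂ n : ℕ, Ici ((n:ℝ)) = ∅ := by
      apply eq_empty_of_forall_notMem fun x hx => ?_
      obtain ⟨n, hn⟩ := exists_nat_gt x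
      exact absurd (mem_iInter.1 hx n) (not_le.2 hn)
    rw [B] at L
    simpa using L
  -- Step 3: by contradiction
  by_contra hcon
  rw [Metric.tendsto_atTop] at hcon
  push_neg at hcon
  obtain ⟨ε, hε, hbad⟩ := hcon
  set δ : ℝ := min T (ε / (2*(M+1))) with hδdef
  have hδpos : 0 < δ := lt_min hT (by positivity)
  have hMδ : M * δ ≤ ε/2 := by
    have h1 : δ ≤ ε/(2*(M+1)) := min_le_right _ _
    have h2 : M * δ ≤ M * (ε/(2*(M+1))) := mul_le_mul_of_nonneg_left h1 hM
    have h3 : M * (ε/(2*(M+1))) ≤ ε/2 := by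
      have hM1 : (M+1) ≠ 0 := by positivity
      have hmm := mul_le_mul_of_nonneg_right (show M ≤ M+1 by linarith)
        (le_of_lt (show (0:ℝ) < ε/(2*(M+1)) by positivity))
      have heq : (M+1) * (ε/(2*(M+1))) = ε/2 := by field_simp
      linarith
    linarith
  have hpos : 0 < δ * (ε/2)^2 := by positivity
  obtain ⟨n, hn⟩ := (tail.eventually (gt_mem_nhds hpos)).exists
  obtain ⟨t, ht, htbad⟩ := hbad (max (n:ℝ) 0)
  have htn : (n:ℝ) ≤ t := le_trans (le_max_left _ _) ht
  have ht0 : (0:ℝ) ≤ t := le_trans (le_max_right _ _) ht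
  rw [Real.dist_eq, sub_zero] at htbad
  -- on [t, t+δ], Z² ≥ (ε/2)²
  have hbig : ∀ s ∈ Icc t (t+δ), (ε/2)^2 ≤ (Z s)^2 := by
    intro s hs
    have h1 : |Z s - Z t| ≤ M * (s - t) := hlip t s ht0 hs.1
    have h2 : M * (s - t) ≤ M * δ := mul_le_mul_of_nonneg_left (by linarith [hs.2]) hM
    have h3 : ε/2 ≤ |Z s| := by
      have := abs_sub_abs_le_abs_sub (Z t) (Z s)
      rw [abs_sub_comm (Z t) (Z s)] at this
      linarith
    calc (ε/2)^2 ≤ |Z s|^2 := pow_le_pow_left₀ (by positivity) h3 2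
      _ = (Z s)^2 := sq_abs _
  have hIccsub : Icc t (t+δ) ⊆ Ici (0:ℝ) := fun s hs => le_trans ht0 hs.1
  have hIccn : Icc t (t+δ) ⊆ Ici ((n:ℝ)) := fun s hs => le_trans htn hs.1
  have hintIcc : IntegrableOn (fun s => (Z s)^2) (Icc t (t+δ)) := hint.mono_set hIccsub
  have hIci_n_sub : Ici ((n:ℝ)) ⊆ Ici (0:ℝ) := Ici_subset_Ici.2 (by positivity)
  have hintn : IntegrableOn (fun s => (Z s)^2) (Ici ((n:ℝ))) := hint.mono_set hIci_n_sub
  have hlow : δ * (ε/2)^2 ≤ ∫ s in Icc t (t+δ), (Z s)^2 := by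
    have hconst : ∫ _ in Icc t (t+δ), (ε/2)^2 = δ * (ε/2)^2 := by
      rw [setIntegral_const, Real.volume_real_Icc]
      rw [show t + δ - t = δ by ring, max_eq_left hδpos.le]
      rw [smul_eq_mul]; try ring
    calc δ * (ε/2)^2 = ∫ _ in Icc t (t+δ), (ε/2)^2 := hconst.symm
      _ ≤ ∫ s in Icc t (t+δ), (Z s)^2 :=
        setIntegral_mono_on (integrableOn_const (by
          rw [Real.volume_Icc]; exact ENNReal.ofReal_ne_top)) hintIcc
          measurableSet_Icc hbig
  have hmono : ∫ s in Icc t (t+δ), (Z s)^2 ≤ ∫ s in Ici ((n:ℝ)), (Z s)^2 := by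
    apply setIntegral_mono_set hintn
    · filter_upwards with s using sq_nonneg _
    · exact hIccn.eventuallyLE
  linarith [hn]
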